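/- Strip Liouville theorem underlying critical slowing down: let β > 0 and let F : ℂ → ℂ be a function that is continuous on the closed strip {z ∈ ℂ : 0 ≤ Im z ≤ β}, holomorphic on the open strip {z ∈ ℂ : 0 < Im z < β}, bounded on the closed strip, and satisfies F(t) = F(t + iβ) for all t ∈ ℝ. Then F is constant on the closed strip. -/

import Mathlib

open Complex Filter Real Topology

set_option maxHeartbeats 1000000 in
open MeasureTheory intervalIntegral Set in
lemma fourier_uniqueness_aux {T : ℝ} [hT : Fact (0 < T)] (f : C(AddCircle T, ℂ))
    (h : ∀ n : ℤ, fourierCoeff (⇑f) n = 0) : ∀ t, f t = 0 := by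
  set fL : Lp ℂ 2 (AddCircle.haarAddCircle : Measure (AddCircle T)) :=
    ContinuousMap.toLp (E := ℂ) 2 AddCircle.haarAddCircle ℂ f with hfL
  have h0 : fL = 0 := by
    rw [← (fourierBasis (T := T)).repr.map_eq_zero_iff]
    apply lp.ext
    rw [lp.coeFn_zero]
    funext n
    have h2 : fourierBasis.repr fL n = fourierCoeff (⇑f) n := by
      rw [fourierBasis_repr]
      exact fourierCoeff_toLp f n
    rw [h2, h n]
    rfl
  have hae : ⇑f =ᵐ[(AddCircle.haarAddCircle : Measure (AddCircle T))] (0 : AddCircle T → ℂ) := by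
    have h1 : ⇑fL =ᵐ[(AddCircle.haarAddCircle : Measure (AddCircle T))] ⇑f :=
      ContinuousMap.coeFn_toLp (p := 2) AddCircle.haarAddCircle (𝕜 := ℂ) f
    rw [h0] at h1
    exact h1.symm.trans (MeasureTheory.Lp.coeFn_zero ℂ 2 _)
  have := (f.continuous.ae_eq_iff_eq (AddCircle.haarAddCircle : Measure (AddCircle T))
      continuous_const).mp hae
  exact fun t => congrFun this t

set_option maxHeartbeats 1000000 in
open MeasureTheory intervalIntegral Set in
/-- Strip Liouville theorem underlying critical slowing down: a function continuous and
bounded on the closed strip `0 ≤ Im z ≤ β`, holomorphic on the open strip `0 < Im z < β`,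
whose boundary values satisfy `F(t) = F(t + iβ)` for all real `t`, is constant on the
closed strip. -/
theorem strip_liouville (β : ℝ) (hβ : 0 < β) (F : ℂ → ℂ)
    (hcont : ContinuousOn F {z : ℂ | 0 ≤ z.im ∧ z.im ≤ β})
    (hholo : DifferentiableOn ℂ F {z : ℂ | 0 < z.im ∧ z.im < β})
    (C : ℝ) (hbd : ∀ z : ℂ, 0 ≤ z.im → z.im ≤ β → ‖F z‖ ≤ C)
    (hper : ∀ t : ℝ, F t = F (t + β * Complex.I)) :
    ∀ z w : ℂ, 0 ≤ z.im → z.im ≤ β → 0 ≤ w.im → w.im ≤ β → F z = F w := by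
  haveI : Fact (0 < β) := ⟨hβ⟩
  have hβ' : (β : ℂ) ≠ 0 := by exact_mod_cast hβ.ne'
  set c : ℤ → ℂ := fun n => ((-(2 * π * n / β) : ℝ) : ℂ) with hc
  set u : ℤ → ℂ → ℂ := fun n ζ => F ζ * Complex.exp (c n * ζ) with hu
  set V : ℤ → ℝ → ℂ := fun n x => ∫ y in (0:ℝ)..β, u n ((x : ℂ) + (y : ℂ) * I) with hV
  -- periodicity of u
  have hu_per : ∀ (n : ℤ) (t : ℝ), u n ((t : ℂ) + (β : ℂ) * I) = u n t := by
    intro n t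
    have h1 : c n * ((t : ℂ) + (β : ℂ) * I) = c n * t + (-n : ℤ) * (2 * (π : ℂ) * I) := by
      simp only [hc]
      push_cast
      field_simp
      ring
    simp only [hu]
    rw [← hper t, h1, Complex.exp_add, Complex.exp_int_mul_two_pi_mul_I, mul_one]
  -- continuity / differentiability of u
  have hu_cont : ∀ n : ℤ, ContinuousOn (u n) {z : ℂ | 0 ≤ z.im ∧ z.im ≤ β} := by
    intro n
    exact hcont.mul ((Complex.continuous_exp.comp (continuous_const.mul continuous_id)).continuousOn)
  have hu_diff : ∀ n : ℤ, DifferentiableOn ℂ (u n) {z : ℂ | 0 < z.im ∧ z.im < β} := by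
    intro n
    exact hholo.mul
      ((Complex.differentiable_exp.comp (differentiable_id.const_mul (c n))).differentiableOn)
  -- the vertical integrals are independent of the abscissa
  have hVconst : ∀ (n : ℤ) (x₁ x₂ : ℝ), V n x₁ = V n x₂ := by
    intro n x₁ x₂
    have hz_re : ((x₁ : ℂ)).re = x₁ := Complex.ofReal_re x₁
    have hz_im : ((x₁ : ℂ)).im = 0 := Complex.ofReal_im x₁
    have hw_re : ((x₂ : ℂ) + (β : ℂ) * I).re = x₂ := by simp
    have hw_im : ((x₂ : ℂ) + (β : ℂ) * I).im = β := by simp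
    have hrect := Complex.integral_boundary_rect_eq_zero_of_continuousOn_of_differentiableOn
      (u n) (x₁ : ℂ) ((x₂ : ℂ) + (β : ℂ) * I) ?_ ?_
    rotate_left
    · rw [hz_re, hz_im, hw_re, hw_im]
      refine (hu_cont n).mono ?_
      intro z hz
      rw [Complex.mem_reProdIm, Set.uIcc_of_le hβ.le] at hz
      exact ⟨hz.2.1, hz.2.2⟩
    · rw [hz_re, hz_im, hw_re, hw_im, min_eq_left hβ.le, max_eq_right hβ.le]
      refine (hu_diff n).mono ?_
      intro z hz
      rw [Complex.mem_reProdIm] at hz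
      exact ⟨hz.2.1, hz.2.2⟩
    rw [hz_re, hz_im, hw_re, hw_im] at hrect
    have heq : (∫ x in x₁..x₂, u n ((x : ℂ) + ((0:ℝ) : ℂ) * I))
        = ∫ x in x₁..x₂, u n ((x : ℂ) + ((β:ℝ) : ℂ) * I) := by
      refine intervalIntegral.integral_congr fun x _ => ?_
      rw [hu_per n x]
      simp only [Complex.ofReal_zero, zero_mul, add_zero]
    rw [heq] at hrect
    have h2 : I * V n x₂ = I * V n x₁ := by
      simp only [hV, smul_eq_mul] at hrect ⊢
      linear_combination hrect
    exact (mul_left_cancel₀ Complex.I_ne_zero h2).symm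
  -- norm of u on the strip
  have hu_norm : ∀ (n : ℤ) (x y : ℝ), 0 ≤ y → y ≤ β →
      ‖u n ((x : ℂ) + (y : ℂ) * I)‖ ≤ C * Real.exp (-(2 * π * n / β) * x) := by
    intro n x y hy0 hyβ
    have him : ((x : ℂ) + (y : ℂ) * I).im = y := by simp
    have hre : ((x : ℂ) + (y : ℂ) * I).re = x := by simp
    have h1 : ‖Complex.exp (c n * ((x : ℂ) + (y : ℂ) * I))‖
        = Real.exp (-(2 * π * n / β) * x) := by
      rw [Complex.norm_exp]
      congr 1
      rw [hc]
      rw [Complex.re_ofReal_mul, hre]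
    simp only [hu, norm_mul, h1]
    refine mul_le_mul_of_nonneg_right ?_ (Real.exp_pos _).le
    refine hbd _ ?_ ?_ <;> rw [him]
    · exact hy0
    · exact hyβ
  have hVb : ∀ (n : ℤ) (x : ℝ), ‖V n x‖ ≤ C * Real.exp (-(2 * π * n / β) * x) * |β - 0| := by
    intro n x
    simp only [hV]
    refine intervalIntegral.norm_integral_le_of_norm_le_const fun y hy => ?_
    rw [Set.uIoc_of_le hβ.le] at hy
    exact hu_norm n x y hy.1.le hy.2
  -- vanishing of the nonzero coefficients
  have hVzero : ∀ n : ℤ, n ≠ 0 → ∀ x : ℝ, V n x = 0 := by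
    intro n hn x
    have hbnd : ∀ t : ℝ, ‖V n x‖ ≤ C * Real.exp (-(2 * π * (n*n) / β) * t) * |β - 0| := by
      intro t
      have h1 := hVb n ((n : ℝ) * t)
      rw [← hVconst n x ((n:ℝ) * t)] at h1
      have : -(2 * π * n / β) * ((n:ℝ) * t) = -(2 * π * ((n:ℝ)*n) / β) * t := by ring
      rwa [this] at h1
    have hk : (0:ℝ) < 2 * π * ((n:ℝ)*n) / β := by
      have hππ := Real.pi_pos
      have hnn : (0:ℝ) < (n:ℝ) * n := mul_self_pos.mpr (by exact_mod_cast hn)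
      positivity
    have hlim : Tendsto (fun t : ℝ => C * Real.exp (-(2 * π * ((n:ℝ)*n) / β) * t) * |β - 0|)
        atTop (𝓝 0) := by
      have h1 : Tendsto (fun t : ℝ => (2 * π * ((n:ℝ)*n) / β) * t) atTop atTop :=
        Tendsto.const_mul_atTop hk tendsto_id
      have h2 : Tendsto (fun t : ℝ => Real.exp (-(2 * π * ((n:ℝ)*n) / β) * t)) atTop (𝓝 0) := by
        have := Real.tendsto_exp_neg_atTop_nhds_zero.comp h1
        refine this.congr fun t => ?_
        simp only [Function.comp_apply]
        ring_nf
      have h3 := (h2.const_mul C).mul_const |β - 0|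
      simpa using h3
    have : ‖V n x‖ ≤ 0 := ge_of_tendsto hlim (Filter.Eventually.of_forall hbnd)
    simpa using le_antisymm this (norm_nonneg _)
  -- the constant value
  set A : ℂ := (β⁻¹ : ℝ) • V 0 0 with hA
  -- Fourier argument on each vertical segment
  have key : ∀ (x : ℝ) (y : ℝ), y ∈ Set.Ico (0:ℝ) β → F ((x : ℂ) + (y : ℂ) * I) = A := by
    intro x
    set g : ℝ → ℂ := fun y => F ((x : ℂ) + (y : ℂ) * I) - A with hg
    have hzero : ((x:ℂ) + ((0:ℝ):ℂ) * I) = (x:ℂ) := by norm_num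
    have hg0 : g 0 = g β := by
      simp only [hg, hzero]
      rw [hper x]
    have hgc : ContinuousOn g (Set.Icc 0 β) := by
      refine ContinuousOn.sub ?_ continuousOn_const
      refine hcont.comp (Continuous.continuousOn
        (continuous_const.add (Complex.continuous_ofReal.mul continuous_const))) ?_
      intro y hy
      constructor <;> simp [hy.1, hy.2]
    have hfc_cont : Continuous (AddCircle.liftIco β 0 g) := by
      refine AddCircle.liftIco_zero_continuous hg0 ?_
      exact hgc
    set fc : C(AddCircle β, ℂ) := ⟨AddCircle.liftIco β 0 g, hfc_cont⟩ with hfc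
    -- integrability facts
    have hFcont : ContinuousOn (fun y : ℝ => F ((x : ℂ) + (y : ℂ) * I)) (Set.uIcc 0 β) := by
      rw [Set.uIcc_of_le hβ.le]
      refine hcont.comp (Continuous.continuousOn
        (continuous_const.add (Complex.continuous_ofReal.mul continuous_const))) ?_
      intro y hy
      constructor <;> simp [hy.1, hy.2]
    have hfour_cont : ∀ n : ℤ, Continuous (fun y : ℝ => (fourier n (y : AddCircle β) : ℂ)) := by
      intro n
      exact (map_continuous (fourier n)).comp (AddCircle.continuous_mk' β)
    have hint1 : ∀ n : ℤ, IntervalIntegrable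
        (fun y : ℝ => (fourier (-n) (y : AddCircle β) : ℂ) * F ((x : ℂ) + (y : ℂ) * I))
        volume 0 β := by
      intro n
      exact (((hfour_cont (-n)).continuousOn).mul hFcont).intervalIntegrable
    have hint2 : ∀ n : ℤ, IntervalIntegrable
        (fun y : ℝ => (fourier (-n) (y : AddCircle β) : ℂ) * A) volume 0 β := by
      intro n
      exact (((hfour_cont (-n)).continuousOn).mul continuousOn_const).intervalIntegrable
    -- the first piece of each coefficient integral
    have hpiece1 : ∀ n : ℤ,
        (∫ y in (0:ℝ)..β, (fourier (-n) (y : AddCircle β) : ℂ) * F ((x : ℂ) + (y : ℂ) * I))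
          = Complex.exp (-(c n * x)) * V n x := by
      intro n
      rw [hV]
      rw [← intervalIntegral.integral_const_mul]
      refine intervalIntegral.integral_congr fun y _ => ?_
      rw [fourier_coe_apply]
      simp only [hu]
      rw [show Complex.exp (-(c n * x)) * (F ((x:ℂ) + (y:ℂ) * I) * Complex.exp (c n * ((x:ℂ) + (y:ℂ) * I)))
          = F ((x:ℂ) + (y:ℂ) * I) * (Complex.exp (-(c n * x)) * Complex.exp (c n * ((x:ℂ) + (y:ℂ) * I))) by ring]
      rw [← Complex.exp_add]
      rw [mul_comm]
      congr 1
      congr 1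
      simp only [hc]
      push_cast
      field_simp
      ring
    -- the second piece
    have hpiece2 : ∀ n : ℤ, n ≠ 0 →
        (∫ y in (0:ℝ)..β, (fourier (-n) (y : AddCircle β) : ℂ) * A) = 0 := by
      intro n hn
      have hcne : (2 * (π:ℂ) * I * (-n) / β) ≠ 0 := by
        apply div_ne_zero _ hβ'
        apply mul_ne_zero
        apply mul_ne_zero
        · simp [Real.pi_ne_zero, Complex.ofReal_ne_zero]
        · exact Complex.I_ne_zero
        · simpa using hn
      have heq : (∫ y in (0:ℝ)..β, (fourier (-n) (y : AddCircle β) : ℂ) * A)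
          = (∫ y in (0:ℝ)..β, Complex.exp ((2 * (π:ℂ) * I * (-n) / β) * y)) * A := by
        rw [← intervalIntegral.integral_mul_const]
        refine intervalIntegral.integral_congr fun y _ => ?_
        rw [fourier_coe_apply]
        congr 2
        push_cast
        ring
      rw [heq, integral_exp_mul_complex hcne]
      have h1 : (2 * (π:ℂ) * I * (-n) / β) * β = ((-n : ℤ) : ℂ) * (2 * (π:ℂ) * I) := by
        rw [div_mul_cancel₀ _ hβ']
        push_cast
        ring
      rw [h1, Complex.exp_int_mul_two_pi_mul_I]
      simp
    -- all Fourier coefficients of the lift vanish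
    have hcoeff : ∀ n : ℤ, fourierCoeff (⇑fc) n = 0 := by
      intro n
      have hsplit : (∫ y in (0:ℝ)..β, (fourier (-n) (y : AddCircle β) : ℂ) * g y)
          = (∫ y in (0:ℝ)..β, (fourier (-n) (y : AddCircle β) : ℂ) * F ((x : ℂ) + (y : ℂ) * I))
            - ∫ y in (0:ℝ)..β, (fourier (-n) (y : AddCircle β) : ℂ) * A := by
        rw [← intervalIntegral.integral_sub (hint1 n) (hint2 n)]
        refine intervalIntegral.integral_congr fun y _ => ?_
        simp only [hg]
        ring
      have hfinal : (∫ y in (0:ℝ)..β, (fourier (-n) (y : AddCircle β) : ℂ) * g y) = 0 := by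
        rw [hsplit]
        rcases eq_or_ne n 0 with hn | hn
        · subst hn
          have hf0 : ∀ y : ℝ, (fourier (-(0:ℤ)) (y : AddCircle β) : ℂ) = 1 := by
            intro y
            simp [fourier_coe_apply]
          have e1 : (∫ y in (0:ℝ)..β, (fourier (-(0:ℤ)) (y : AddCircle β) : ℂ)
              * F ((x : ℂ) + (y : ℂ) * I)) = V 0 0 := by
            rw [hVconst 0 0 x, hV]
            refine intervalIntegral.integral_congr fun y _ => ?_
            rw [hf0 y, one_mul]
            simp only [hu]
            have : c 0 = 0 := by simp [hc]
            rw [this, zero_mul, Complex.exp_zero, mul_one]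
          have e2 : (∫ y in (0:ℝ)..β, (fourier (-(0:ℤ)) (y : AddCircle β) : ℂ) * A)
              = (β : ℂ) * A := by
            have : (∫ y in (0:ℝ)..β, (fourier (-(0:ℤ)) (y : AddCircle β) : ℂ) * A)
                = ∫ y in (0:ℝ)..β, A := by
              refine intervalIntegral.integral_congr fun y _ => ?_
              rw [hf0 y, one_mul]
            rw [this, intervalIntegral.integral_const]
            simp [Complex.real_smul]
          rw [e1, e2]
          have : (β : ℂ) * A = V 0 0 := by
            rw [hA, Complex.real_smul]
            rw [← mul_assoc]
            rw [← Complex.ofReal_mul]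
            rw [mul_inv_cancel₀ hβ.ne']
            simp
          rw [this]
          simp
        · rw [hpiece1 n, hpiece2 n hn, hVzero n hn x]
          simp
      rw [fourierCoeff_eq_intervalIntegral (⇑fc) n 0, zero_add]
      have h3 : (∫ y in (0:ℝ)..β, (fourier (-n) (y : AddCircle β) : ℂ) • fc ((y : ℝ) : AddCircle β))
          = (0:ℂ) := by
        rw [← hfinal]
        refine intervalIntegral.integral_congr fun y hy => ?_
        rw [Set.uIcc_of_le hβ.le] at hy
        rw [smul_eq_mul]
        congr 1
        rcases eq_or_lt_of_le hy.2 with hyb | hyb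
        · rw [hyb]
          have hb : ((β : ℝ) : AddCircle β) = ((0:ℝ) : AddCircle β) := by
            rw [AddCircle.coe_period, QuotientAddGroup.mk_zero]
          rw [hb]
          have h0' : fc (((0:ℝ) : ℝ) : AddCircle β) = g 0 :=
            AddCircle.liftIco_coe_apply (f := g) ⟨le_refl 0, by simpa using hβ⟩
          rw [h0', hg0]
        · exact AddCircle.liftIco_coe_apply (f := g) ⟨hy.1, by simpa using hyb⟩
      have h4 : ((1:ℝ)/β) • (∫ y in (0:ℝ)..β,
          (fourier (-n) (y : AddCircle β) : ℂ) • fc ((y : ℝ) : AddCircle β)) = 0 := by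
        rw [h3, smul_zero]
      exact h4
    -- conclude g = 0 on [0, β)
    intro y hy
    have h0 := fourier_uniqueness_aux fc hcoeff (y : AddCircle β)
    have h1 : fc (y : AddCircle β) = g y := by
      simp only [hfc, ContinuousMap.coe_mk]
      exact AddCircle.liftIco_coe_apply (by simpa using hy)
    rw [h1] at h0
    exact sub_eq_zero.mp h0
  -- finish
  have hval : ∀ z : ℂ, 0 ≤ z.im → z.im ≤ β → F z = A := by
    intro z h0 h1
    rcases lt_or_eq_of_le h1 with h2 | h2
    · have := key z.re z.im ⟨h0, h2⟩
      rwa [Complex.re_add_im] at this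
    · have hz : z = (z.re : ℂ) + (β : ℂ) * I := by
        rw [← Complex.re_add_im z, h2]
        simp
      rw [hz, ← hper z.re]
      have := key z.re 0 ⟨le_refl 0, hβ⟩
      simpa using this
  intro z w hz1 hz2 hw1 hw2
  rw [hval z hz1 hz2, hval w hw1 hw2]
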